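/- (The paper's Lemma on null vectors.) Let V be a finite-dimensional real vector space, Q a nondegenerate quadratic form on V, and M a finite-dimensional Cℓ(Q)-module. Let v ∈ V be a nonzero null vector, i.e. v ≠ 0 and Q(v) = 0, and set L_v := ker γ_v ⊆ M. Then: (a) ker γ_v = range γ_v; (b) 2·dim L_v = dim M; and (c) if h is a bilinear form on M of type τ ∈ {+1, −1}, then L_v is h-isotropic, i.e. h(s,t) = 0 for all s, t ∈ L_v. -/

import Mathlib

/-- The Clifford multiplication `γ_v : s ↦ ι(v) • s` as an `ℝ`-linear endomorphism
of a `Cℓ(Q)`-module `M`. -/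
noncomputable def gammaLin {V : Type*} [AddCommGroup V] [Module ℝ V]
    (Q : QuadraticForm ℝ V) {M : Type*} [AddCommGroup M] [Module ℝ M]
    [Module (CliffordAlgebra Q) M] [IsScalarTower ℝ (CliffordAlgebra Q) M]
    (v : V) : M →ₗ[ℝ] M where
  toFun s := CliffordAlgebra.ι Q v • s
  map_add' s t := smul_add _ s t
  map_smul' r s := (smul_comm r (CliffordAlgebra.ι Q v) s).symm

/-- Lemma on null vectors: for a nonzero null vector `v` of a nondegenerate quadratic
form `Q` and a finite-dimensional Clifford module `M`, the subspace `L_v = ker γ_v`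
equals `range γ_v`, has half the dimension of `M`, and is isotropic for any bilinear
form `h` on `M` of type `τ ∈ {+1, −1}`. -/
theorem null_vector_lemma
    {V : Type*} [AddCommGroup V] [Module ℝ V] [FiniteDimensional ℝ V]
    (Q : QuadraticForm ℝ V) (hQ : (QuadraticMap.polarBilin Q).Nondegenerate)
    {M : Type*} [AddCommGroup M] [Module ℝ M] [FiniteDimensional ℝ M]
    [Module (CliffordAlgebra Q) M] [IsScalarTower ℝ (CliffordAlgebra Q) M]
    (v : V) (hv : v ≠ 0) (hnull : Q v = 0)
    (h : LinearMap.BilinForm ℝ M) (τ : ℝ) (hτ : τ = 1 ∨ τ = -1)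
    (htype : ∀ (x : V) (s t : M), h (gammaLin Q x s) t = τ * h s (gammaLin Q x t)) :
    LinearMap.ker (gammaLin Q (M := M) v) = LinearMap.range (gammaLin Q (M := M) v) ∧
    2 * Module.finrank ℝ (LinearMap.ker (gammaLin Q (M := M) v)) = Module.finrank ℝ M ∧
    (∀ s ∈ LinearMap.ker (gammaLin Q (M := M) v), ∀ t ∈ LinearMap.ker (gammaLin Q (M := M) v),
      h s t = 0) := by
  classical
  obtain ⟨w, hw⟩ : ∃ w, QuadraticMap.polar Q v w ≠ 0 := by
    by_contra hcon
    push_neg at hcon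
    exact hv (hQ.1 v fun w => hcon w)
  set c := QuadraticMap.polar Q v w with hc
  set w' := c⁻¹ • w with hw'
  have hpol : QuadraticMap.polar Q v w' = 1 := by
    rw [hw', QuadraticMap.polar_smul_right]
    rw [smul_eq_mul, ← hc]
    field_simp
  have key : ∀ s : M,
      gammaLin Q v (gammaLin Q w' s) + gammaLin Q w' (gammaLin Q v s) = s := by
    intro s
    have h1 : (CliffordAlgebra.ι Q v * CliffordAlgebra.ι Q w' +
        CliffordAlgebra.ι Q w' * CliffordAlgebra.ι Q v) • s = s := by
      rw [CliffordAlgebra.ι_mul_ι_add_swap, hpol, map_one, one_smul]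
    simpa [gammaLin, mul_smul, add_smul] using h1
  have hsq : ∀ s : M, gammaLin Q v (gammaLin Q v s) = 0 := by
    intro s
    show CliffordAlgebra.ι Q v • CliffordAlgebra.ι Q v • s = (0 : M)
    rw [← mul_smul, CliffordAlgebra.ι_sq_scalar, hnull, map_zero, zero_smul]
  have hker : LinearMap.ker (gammaLin Q (M := M) v) =
      LinearMap.range (gammaLin Q (M := M) v) := by
    ext s
    constructor
    · intro hs
      rw [LinearMap.mem_ker] at hs
      refine ⟨gammaLin Q w' s, ?_⟩
      have := key s
      rwa [hs, map_zero, add_zero] at this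
    · rintro ⟨t, rfl⟩
      exact hsq t
  refine ⟨hker, ?_, ?_⟩
  · have hrn := LinearMap.finrank_range_add_finrank_ker (gammaLin Q (M := M) v)
    rw [← hker] at hrn
    omega
  · intro s hs t ht
    rw [LinearMap.mem_ker] at hs ht
    have hsrep : gammaLin Q v (gammaLin Q w' s) = s := by
      have := key s
      rwa [hs, map_zero, add_zero] at this
    calc h s t = h (gammaLin Q v (gammaLin Q w' s)) t := by rw [hsrep]
      _ = τ * h (gammaLin Q w' s) (gammaLin Q v t) := htype v _ t
      _ = 0 := by rw [ht, map_zero, mul_zero]
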